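/- The identity compound optic: given a bicategory B, pseudofunctors F, G from B to Cat, a 0-cell i and objects a : F i, b : G i, the class of ⟨𝟙 i, (F.mapId i).inv.app a, (G.mapId i).hom.app b⟩ in O_{i,i}⟨a,b⟩⟨a,b⟩ is a two-sided identity for the composition of compound optics: composing any compound optic in O_{i,j}⟨a,b⟩⟨s,t⟩ with it on either side (at i or at j) returns the same optic. -/

import Mathlib

open CategoryTheory

universe w₁ v₁ u₁ v u

variable {B : Type u} [Bicategory.{w₁, v} B]

section
variable (F G : Pseudofunctor B Cat.{v₁, u₁})

/-- Raw representatives of compound optics: a residual 1-cell `m : i ⟶ j`, a forward part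
`s ⟶ (F.map m).obj a` and a backward part `(G.map m).obj b ⟶ t`. -/
def COpticRaw {i j : B} (a : F.obj i) (b : G.obj i) (s : F.obj j) (t : G.obj j) : Type _ :=
  Σ m : i ⟶ j, (s ⟶ (F.map m).toFunctor.obj a) × ((G.map m).toFunctor.obj b ⟶ t)

/-- The generating relation of the coend over the hom-category `B(i,j)`: for a 2-cell
`φ : m ⟶ m'`, identify `⟨m', f ≫ (F.map₂ φ).app a, g⟩` with `⟨m, f, (G.map₂ φ).app b ≫ g⟩`. -/
inductive COpticRel {i j : B} (a : F.obj i) (b : G.obj i) (s : F.obj j) (t : G.obj j) :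
    COpticRaw F G a b s t → COpticRaw F G a b s t → Prop
  | mk {m m' : i ⟶ j} (φ : m ⟶ m') (f : s ⟶ (F.map m).toFunctor.obj a) (g : (G.map m').toFunctor.obj b ⟶ t) :
      COpticRel a b s t ⟨m', f ≫ (F.map₂ φ).toNatTrans.app a, g⟩ ⟨m, f, (G.map₂ φ).toNatTrans.app b ≫ g⟩

/-- Composition of raw compound optics, using the compositors of `F` and `G`. -/
def COpticRaw.comp {i j k : B} {a : F.obj i} {b : G.obj i} {s : F.obj j} {t : G.obj j}
    {u : F.obj k} {v : G.obj k} (x : COpticRaw F G a b s t) (y : COpticRaw F G s t u v) :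
    COpticRaw F G a b u v :=
  ⟨x.1 ≫ y.1,
   y.2.1 ≫ (F.map y.1).toFunctor.map x.2.1 ≫ (F.mapComp x.1 y.1).inv.toNatTrans.app a,
   (G.mapComp x.1 y.1).hom.toNatTrans.app b ≫ (G.map y.1).toFunctor.map x.2.2 ≫ y.2.2⟩

/-- The identity raw compound optic at `i`, built from the identity 1-cell `𝟙 i` and the
unitors of `F` and `G`. -/
def COpticRaw.id (i : B) (a : F.obj i) (b : G.obj i) : COpticRaw F G a b a b :=
  ⟨𝟙 i, (F.mapId i).inv.toNatTrans.app a, (G.mapId i).hom.toNatTrans.app b⟩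

end

open Bicategory in
/-- The class of `⟨𝟙 i, (F.mapId i).inv.app a, (G.mapId i).hom.app b⟩` is a two-sided
identity for the composition of compound optics. -/
theorem coptic_id (F G : Pseudofunctor B Cat.{v₁, u₁}) (i j : B)
    (a : F.obj i) (b : G.obj i) (s : F.obj j) (t : G.obj j)
    (x : COpticRaw F G a b s t) :
    Quot.mk (COpticRel F G a b s t) (COpticRaw.comp F G (COpticRaw.id F G i a b) x) =
        Quot.mk _ x ∧
    Quot.mk (COpticRel F G a b s t) (COpticRaw.comp F G x (COpticRaw.id F G j s t)) =
        Quot.mk _ x := by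
  obtain ⟨m, f, g⟩ := x
  constructor
  · have e1 : (COpticRaw.comp F G (COpticRaw.id F G i a b) ⟨m, f, g⟩ : COpticRaw F G a b s t)
        = Sigma.mk (𝟙 i ≫ m) (Prod.mk (f ≫ (F.map₂ (λ_ m).inv).toNatTrans.app a)
            ((G.map₂ (λ_ m).hom).toNatTrans.app b ≫ g)) := by
      simp only [COpticRaw.comp, COpticRaw.id]
      congr 1
      have hF : F.map₂ (λ_ m).inv =
          (λ_ (F.map m)).inv ≫ (F.mapId i).inv ▷ F.map m ≫ (F.mapComp (𝟙 i) m).inv := by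
        rw [← cancel_epi (F.map₂ (λ_ m).hom), ← F.map₂_comp]
        simp
      refine Prod.ext ?_ ?_
      · show _ = f ≫ (F.map₂ (λ_ m).inv).toNatTrans.app a
        rw [hF]
        simp [Cat.whiskerRight_app, Cat.leftUnitor_inv_app]
      · show _ = (G.map₂ (λ_ m).hom).toNatTrans.app b ≫ g
        rw [G.map₂_left_unitor]
        simp [Cat.whiskerRight_app, Cat.leftUnitor_hom_app]
    rw [e1]
    refine (Quot.sound (COpticRel.mk ((λ_ m).inv) f _)).trans ?_
    congr 2
    refine Prod.ext rfl ?_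
    show (G.map₂ (λ_ m).inv).toNatTrans.app b ≫ (G.map₂ (λ_ m).hom).toNatTrans.app b ≫ g = g
    rw [← Category.assoc, ← Cat.Hom₂.comp_app, ← G.map₂_comp]
    simp
  · have e1 : (COpticRaw.comp F G ⟨m, f, g⟩ (COpticRaw.id F G j s t) : COpticRaw F G a b s t)
        = Sigma.mk (m ≫ 𝟙 j) (Prod.mk (f ≫ (F.map₂ (ρ_ m).inv).toNatTrans.app a)
            ((G.map₂ (ρ_ m).hom).toNatTrans.app b ≫ g)) := by
      simp only [COpticRaw.comp, COpticRaw.id]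
      congr 1
      have hF : F.map₂ (ρ_ m).inv =
          (ρ_ (F.map m)).inv ≫ F.map m ◁ (F.mapId j).inv ≫ (F.mapComp m (𝟙 j)).inv := by
        rw [← cancel_epi (F.map₂ (ρ_ m).hom), ← F.map₂_comp]
        simp
      refine Prod.ext ?_ ?_
      · show _ = f ≫ (F.map₂ (ρ_ m).inv).toNatTrans.app a
        rw [hF]
        simp only [Cat.whiskerLeft_app, Cat.rightUnitor_inv_app, Cat.Hom₂.comp_app,
          NatTrans.comp_app]
        rw [← NatTrans.naturality_assoc]
        simp
      · show _ = (G.map₂ (ρ_ m).hom).toNatTrans.app b ≫ g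
        rw [G.map₂_right_unitor]
        simp [Cat.whiskerLeft_app, Cat.rightUnitor_hom_app]
    rw [e1]
    refine (Quot.sound (COpticRel.mk ((ρ_ m).inv) f _)).trans ?_
    congr 2
    refine Prod.ext rfl ?_
    show (G.map₂ (ρ_ m).inv).toNatTrans.app b ≫ (G.map₂ (ρ_ m).hom).toNatTrans.app b ≫ g = g
    rw [← Category.assoc, ← Cat.Hom₂.comp_app, ← G.map₂_comp]
    simp
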